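/- The sequence H₁(B,M) → H₁(A,M) → H₁((A,B,ε);M) is exact at H₁(A,M): the kernel of Φ¹ equals the image of ε_*. -/

import Mathlib

/-!
STATEMENT 12: The sequence H₁(B,M) → H₁(A,M) → H₁((A,B,ε);M) is exact at H₁(A,M):
the kernel of Φ¹ equals the image of ε_*.

Here (A,B,ε) is a triple over a commutative ring k and M is an A-bimodule on which k
acts centrally and which is B-symmetric; H₁(B,M) = (M⊗B)/im d₂^B,
H₁(A,M) = ker d₁ / im d₂ and H₁((A,B,ε);M) = ker ∂₁ / im ∂₂ (note ∂₁ = d₁).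
ε_* is induced by m⊗α ↦ m⊗ε(α) and Φ¹ by the identity of M⊗A.  All chain maps and
induced maps are quantified universally, characterized by their values on pure
tensors (resp. on classes).
-/

open TensorProduct MulOpposite

set_option maxSynthPendingDepth 8

theorem secondaryHochschild_exact_at_H1A
    (k : Type*) [CommRing k]
    (A : Type*) [Ring A] [Algebra k A]
    (B : Type*) [CommRing B] [Algebra k B]
    (ε : B →ₐ[k] A) (hcen : ∀ (b : B) (a : A), ε b * a = a * ε b)
    (M : Type*) [AddCommGroup M] [Module k M]
    [Module A M] [Module Aᵐᵒᵖ M] [SMulCommClass A Aᵐᵒᵖ M]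
    [IsScalarTower k A M] [IsScalarTower k Aᵐᵒᵖ M]
    (hsymm : ∀ (b : B) (m : M), ε b • m = op (ε b) • m)
    -- the usual Hochschild differentials d₁, d₂ for A
    (d1 : M ⊗[k] A →ₗ[k] M)
    (hd1 : ∀ (m : M) (a : A), d1 (m ⊗ₜ[k] a) = op a • m - a • m)
    (d2 : M ⊗[k] A ⊗[k] A →ₗ[k] M ⊗[k] A)
    (hd2 : ∀ (m : M) (a b : A),
      d2 (m ⊗ₜ[k] a ⊗ₜ[k] b) =
        (op a • m) ⊗ₜ[k] b - m ⊗ₜ[k] (a * b) + (b • m) ⊗ₜ[k] a)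
    -- the Hochschild differential d₂^B for B with coefficients in M
    (d2B : M ⊗[k] B ⊗[k] B →ₗ[k] M ⊗[k] B)
    (hd2B : ∀ (m : M) (α β : B),
      d2B (m ⊗ₜ[k] α ⊗ₜ[k] β) =
        (op (ε α) • m) ⊗ₜ[k] β - m ⊗ₜ[k] (α * β) + (ε β • m) ⊗ₜ[k] α)
    -- the secondary Hochschild differentials ∂₁, ∂₂
    (p1 : M ⊗[k] A →ₗ[k] M)
    (hp1 : ∀ (m : M) (a : A), p1 (m ⊗ₜ[k] a) = op a • m - a • m)
    (p2 : M ⊗[k] A ⊗[k] A ⊗[k] B →ₗ[k] M ⊗[k] A)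
    (hp2 : ∀ (m : M) (a b : A) (α : B),
      p2 (m ⊗ₜ[k] a ⊗ₜ[k] b ⊗ₜ[k] α) =
        (op (a * ε α) • m) ⊗ₜ[k] b - m ⊗ₜ[k] (a * ε α * b) + ((b * ε α) • m) ⊗ₜ[k] a)
    -- the chain-level map m⊗α ↦ m⊗ε(α)
    (e : M ⊗[k] B →ₗ[k] M ⊗[k] A)
    (he : ∀ (m : M) (α : B), e (m ⊗ₜ[k] α) = m ⊗ₜ[k] ε α)
    -- the induced map ε_* : H₁(B,M) → H₁(A,M)
    (εs : ((M ⊗[k] B) ⧸ LinearMap.range d2B)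
        →ₗ[k] (↥(LinearMap.ker d1) ⧸ (LinearMap.range d2).comap (LinearMap.ker d1).subtype))
    (hεs : ∀ (z : M ⊗[k] B) (hz : e z ∈ LinearMap.ker d1),
      εs (Submodule.Quotient.mk z) = Submodule.Quotient.mk ⟨e z, hz⟩)
    -- the induced map Φ¹ : H₁(A,M) → H₁((A,B,ε);M)
    (Phi1 : (↥(LinearMap.ker d1) ⧸ (LinearMap.range d2).comap (LinearMap.ker d1).subtype)
        →ₗ[k] (↥(LinearMap.ker p1) ⧸ (LinearMap.range p2).comap (LinearMap.ker p1).subtype))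
    (hPhi1 : ∀ (x : M ⊗[k] A) (hx : x ∈ LinearMap.ker d1) (hx' : x ∈ LinearMap.ker p1),
      Phi1 (Submodule.Quotient.mk ⟨x, hx⟩) = Submodule.Quotient.mk ⟨x, hx'⟩) :
    LinearMap.ker Phi1 = LinearMap.range εs := by

  classical
  have hdp : d1 = p1 := TensorProduct.ext' (fun m a => by rw [hd1, hp1])
  have hkd : ∀ x : M ⊗[k] A, x ∈ LinearMap.ker d1 ↔ x ∈ LinearMap.ker p1 := by
    intro x; rw [hdp]
  -- e z is always a cycle for d1
  have hez : ∀ z : M ⊗[k] B, e z ∈ LinearMap.ker d1 := by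
    intro z
    have : d1 ∘ₗ e = 0 := TensorProduct.ext' (fun m α => by
      simp [he, hd1, hsymm])
    have := congrArg (fun f => f z) this
    simpa [LinearMap.mem_ker] using this
  -- e z is always in the range of p2
  have hpe : ∀ z : M ⊗[k] B, e z ∈ LinearMap.range p2 := by
    intro z
    induction z using TensorProduct.induction_on with
    | zero => simp only [map_zero]; exact zero_mem _
    | tmul m α =>
        refine ⟨m ⊗ₜ[k] (ε α) ⊗ₜ[k] (1 : A) ⊗ₜ[k] (1 : B)
          + (ε α • m) ⊗ₜ[k] (1 : A) ⊗ₜ[k] (1 : A) ⊗ₜ[k] (1 : B)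
          - m ⊗ₜ[k] (1 : A) ⊗ₜ[k] (1 : A) ⊗ₜ[k] α, ?_⟩
        rw [map_sub, map_add, hp2, hp2, hp2, he]
        simp only [map_one, mul_one, one_mul, one_smul, op_one]
        abel
    | add x y hx hy => rw [map_add]; exact add_mem hx hy
  -- p2 w lies in range d2 ⊔ range e
  have hrange : ∀ w : M ⊗[k] A ⊗[k] A ⊗[k] B,
      p2 w ∈ LinearMap.range d2 ⊔ LinearMap.range e := by
    intro w
    induction w using TensorProduct.induction_on with
    | zero => simp only [map_zero]; exact zero_mem _
    | add x y hx hy => rw [map_add]; exact add_mem hx hy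
    | tmul t α =>
      induction t using TensorProduct.induction_on with
      | zero => rw [zero_tmul, map_zero]; exact zero_mem _
      | add x y hx hy => rw [add_tmul, map_add]; exact add_mem hx hy
      | tmul s b =>
        induction s using TensorProduct.induction_on with
        | zero => rw [zero_tmul, zero_tmul, map_zero]; exact zero_mem _
        | add x y hx hy =>
            rw [add_tmul, add_tmul, map_add]; exact add_mem hx hy
        | tmul m a =>
          have key : p2 (m ⊗ₜ[k] a ⊗ₜ[k] b ⊗ₜ[k] α)
              = d2 (m ⊗ₜ[k] (a * ε α) ⊗ₜ[k] b) + d2 ((b • m) ⊗ₜ[k] a ⊗ₜ[k] ε α)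
                - e ((op a • b • m) ⊗ₜ[k] α) := by
            rw [hp2, hd2, hd2, he]
            have h1 : (b * ε α) • m = ε α • b • m := by
              rw [← mul_smul, ← hcen]
            rw [h1]
            abel
          rw [key]
          exact sub_mem
            (add_mem (Submodule.mem_sup_left (LinearMap.mem_range_self _ _))
              (Submodule.mem_sup_left (LinearMap.mem_range_self _ _)))
            (Submodule.mem_sup_right (LinearMap.mem_range_self _ _))
  ext c
  constructor
  · intro hc
    rw [LinearMap.mem_ker] at hc
    obtain ⟨y, rfl⟩ := Submodule.Quotient.mk_surjective _ c
    obtain ⟨x, hx⟩ := y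
    have hx' : x ∈ LinearMap.ker p1 := (hkd x).1 hx
    rw [hPhi1 x hx hx', Submodule.Quotient.mk_eq_zero] at hc
    rw [Submodule.mem_comap] at hc
    obtain ⟨w, hw⟩ := hc
    have hw' : p2 w = x := hw
    have hxmem : x ∈ LinearMap.range d2 ⊔ LinearMap.range e := by
      rw [← hw']; exact hrange w
    rw [Submodule.mem_sup] at hxmem
    obtain ⟨y₁, hy₁, y₂, hy₂, hsum⟩ := hxmem
    obtain ⟨z, rfl⟩ := hy₂
    refine ⟨Submodule.Quotient.mk z, ?_⟩
    rw [hεs z (hez z)]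
    rw [Submodule.Quotient.eq]
    rw [Submodule.mem_comap]
    have : ((⟨e z, hez z⟩ : LinearMap.ker d1) - ⟨x, hx⟩ : LinearMap.ker d1).1
        = e z - x := rfl
    show (LinearMap.ker d1).subtype _ ∈ LinearMap.range d2
    rw [Submodule.subtype_apply, this, ← hsum]
    have : e z - (y₁ + e z) = -y₁ := by abel
    rw [this]
    exact neg_mem hy₁
  · rintro ⟨q, hq⟩
    obtain ⟨z, rfl⟩ := Submodule.Quotient.mk_surjective _ q
    rw [LinearMap.mem_ker, ← hq, hεs z (hez z),
      hPhi1 (e z) (hez z) ((hkd (e z)).1 (hez z)),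
      Submodule.Quotient.mk_eq_zero]
    exact Submodule.mem_comap.2 (hpe z)
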